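/- arXiv:1404.1183 — 3 statements merged into one kernel-verified Lean document; each statement's English description precedes it below -/
import Mathlib

section
/- Let n be even, and let f, g ∈ ℂⁿ be discrete signals. Let (ψ_j)_{j∈ℤ} be discrete Cauchy wavelets with ψ̂_j[k] = ρ(a^j k)(a^j k)^p e^{-a^j k} 1_{k ≥ 0} for k = -n/2+1, ..., n/2, where p > 0, a > 1, and ρ : ℝ⁺ → ℂ is non-vanishing with ρ(ax) = ρ(x). Then for two distinct integers j ≠ l, the equalities |f ⋆ ψ_j| = |g ⋆ ψ_j| and |f ⋆ ψ_l| = |g ⋆ ψ_l| hold if and only if there exist φ ∈ ℝ and c ∈ ℂ such that f₊ = e^{iφ} g₊ + c. -/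
open Complex Real

set_option maxHeartbeats 1000000

noncomputable section

/-- Discrete Fourier transform `f̂[k] = Σ_{s=0}^{n-1} f[s] e^{-2πisk/n}`. -/
def dft (n : ℕ) (f : Fin n → ℂ) (k : ℤ) : ℂ :=
  ∑ s : Fin n, f s * Complex.exp (-2 * π * Complex.I * (s : ℕ) * k / n)

/-- The frequencies `k = -n/2 + 1, ..., n/2`. -/
def freqs (n : ℕ) : Finset ℤ := Finset.Icc (-(n : ℤ) / 2 + 1) ((n : ℤ) / 2)

/-- Inverse discrete Fourier transform from frequency data on `freqs n`. -/
def idft (n : ℕ) (F : ℤ → ℂ) (s : Fin n) : ℂ :=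
  (1 / (n : ℂ)) * ∑ k ∈ freqs n, F k * Complex.exp (2 * π * Complex.I * k * (s : ℕ) / n)

/-- Discrete Cauchy wavelet in the Fourier domain:
`ψ̂_j[k] = ρ(a^j k) (a^j k)^p e^{-a^j k} 1_{k ≥ 0}`. -/
def dCauchyHat (a p : ℝ) (ρ : ℝ → ℂ) (j k : ℤ) : ℂ :=
  if 0 ≤ k then
    ρ (a ^ j * k) * (((a ^ j * k) ^ p : ℝ) : ℂ) * (Real.exp (-(a ^ j * k)) : ℂ)
  else 0

/-- Circular convolution of `f` with the wavelet `ψ_j`, via Fourier multiplication. -/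
def dConv (n : ℕ) (a p : ℝ) (ρ : ℝ → ℂ) (j : ℤ) (f : Fin n → ℂ) (s : Fin n) : ℂ :=
  idft n (fun k => dft n f k * dCauchyHat a p ρ j k) s

/-- The discrete analytic part `f₊`, defined through its DFT:
`f̂₊[k] = 0` for `k < 0`, `f̂₊[k] = f̂[k]` for `k = 0` or `k = n/2`, `f̂₊[k] = 2 f̂[k]`
for `0 < k < n/2`. -/
def dAnalyticPart (n : ℕ) (f : Fin n → ℂ) (s : Fin n) : ℂ :=
  idft n (fun k =>
    (if k < 0 then 0 else if k = 0 ∨ k = (n : ℤ) / 2 then 1 else 2) * dft n f k) s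

lemma cexp_dvd_iff (n : ℕ) (hn0 : 0 < n) (m : ℤ) :
    Complex.exp (2 * π * Complex.I * m / n) = 1 ↔ (n:ℤ) ∣ m := by
  rw [Complex.exp_eq_one_iff]
  have hnC : (n:ℂ) ≠ 0 := Nat.cast_ne_zero.2 hn0.ne'
  have h2 : (2:ℂ) * π * Complex.I ≠ 0 := by
    simp [Real.pi_ne_zero, Complex.I_ne_zero, Complex.ofReal_ne_zero]
  constructor
  · rintro ⟨k, hk⟩
    refine ⟨k, ?_⟩
    have hm : (m:ℂ) = n * k := by
      field_simp at hk
      apply mul_left_cancel₀ h2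
      linear_combination (2 * (π:ℂ) * Complex.I) * hk
    exact_mod_cast hm
  · rintro ⟨k, rfl⟩
    refine ⟨k, ?_⟩
    rw [div_eq_iff hnC]
    push_cast
    ring

lemma sum_cexp (n : ℕ) (hn0 : 0 < n) (m : ℤ) :
    ∑ s : Fin n, Complex.exp (2 * π * Complex.I * m * (s:ℕ) / n)
      = if (n:ℤ) ∣ m then (n:ℂ) else 0 := by
  have hnC : (n:ℂ) ≠ 0 := Nat.cast_ne_zero.2 hn0.ne'
  have key : ∀ s : Fin n, Complex.exp (2 * π * Complex.I * m * (s:ℕ) / n)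
      = Complex.exp (2 * π * Complex.I * m / n) ^ (s:ℕ) := by
    intro s
    rw [← Complex.exp_nat_mul]
    congr 1
    ring
  simp_rw [key]
  set w := Complex.exp (2 * π * Complex.I * m / n) with hw
  by_cases h : (n:ℤ) ∣ m
  · have hw1 : w = 1 := (cexp_dvd_iff n hn0 m).2 h
    simp [hw1, if_pos h]
  · have hw1 : w ≠ 1 := fun hc => h ((cexp_dvd_iff n hn0 m).1 hc)
    rw [if_neg h, Fin.sum_univ_eq_sum_range, geom_sum_eq hw1]
    have hwn : w ^ n = 1 := by
      calc w ^ n = Complex.exp ((n:ℂ) * (2 * π * Complex.I * m / n)) :=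
            (Complex.exp_nat_mul _ n).symm
        _ = Complex.exp ((m:ℂ) * (2 * π * Complex.I)) := by
            congr 1
            rw [mul_div_assoc']
            rw [mul_comm ((n:ℂ)) _, mul_div_assoc, div_self hnC, mul_one]
            ring
        _ = 1 := Complex.exp_int_mul_two_pi_mul_I m
    rw [hwn, sub_self, zero_div]

lemma freqs_card_aux (n : ℕ) (k k₀ : ℤ) (hk : k ∈ freqs n) (hk₀ : k₀ ∈ freqs n)
    (h : (n:ℤ) ∣ k - k₀) : k = k₀ := by
  simp only [freqs, Finset.mem_Icc] at hk hk₀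
  obtain ⟨q, hq⟩ := h
  have h1 : -(n:ℤ) < k - k₀ := by omega
  have h2 : k - k₀ < n := by omega
  have hq0 : q = 0 := by
    rcases lt_trichotomy q 0 with h | h | h
    · exfalso; nlinarith
    · exact h
    · exfalso; nlinarith
  rw [hq0, mul_zero] at hq
  omega

lemma dft_idft (n : ℕ) (hn0 : 0 < n) (F : ℤ → ℂ) (k₀ : ℤ) (hk₀ : k₀ ∈ freqs n) :
    dft n (idft n F) k₀ = F k₀ := by
  have hnC : (n:ℂ) ≠ 0 := Nat.cast_ne_zero.2 hn0.ne'
  unfold dft idft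
  have step : ∀ s : Fin n,
      (1 / (n:ℂ) * ∑ k ∈ freqs n, F k * Complex.exp (2 * π * Complex.I * k * (s:ℕ) / n))
        * Complex.exp (-2 * π * Complex.I * (s:ℕ) * k₀ / n)
      = 1 / (n:ℂ) * ∑ k ∈ freqs n,
          F k * Complex.exp (2 * π * Complex.I * ((k - k₀ : ℤ) : ℂ) * (s:ℕ) / n) := by
    intro s
    rw [mul_comm _ (Complex.exp _), ← mul_assoc, mul_comm _ (1/(n:ℂ)), mul_assoc]
    congr 1
    rw [Finset.mul_sum]
    apply Finset.sum_congr rfl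
    intro k _
    rw [mul_comm (Complex.exp _) _, mul_assoc, ← Complex.exp_add]
    congr 2
    push_cast
    ring
  simp_rw [step]
  rw [← Finset.mul_sum, Finset.sum_comm]
  have inner : ∀ k ∈ freqs n,
      ∑ s : Fin n, F k * Complex.exp (2 * π * Complex.I * ((k - k₀ : ℤ):ℂ) * (s:ℕ) / n)
      = F k * if (n:ℤ) ∣ (k - k₀) then (n:ℂ) else 0 := by
    intro k _
    rw [← Finset.mul_sum, sum_cexp n hn0]
  rw [Finset.sum_congr rfl inner]
  have final : ∑ k ∈ freqs n, (F k * if (n:ℤ) ∣ (k - k₀) then (n:ℂ) else 0)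
      = F k₀ * n := by
    rw [Finset.sum_eq_single k₀]
    · rw [if_pos ⟨0, by ring⟩]
    · intro k hk hne
      rw [if_neg (fun hc => hne (freqs_card_aux n k k₀ hk hk₀ hc)), mul_zero]
    · intro h; exact absurd hk₀ h
  rw [final]
  field_simp
open Polynomial in
/-- `P_u(X) = ∑_{k=1}^{N} u k X^k`. -/
def Pp (N : ℕ) (u : ℕ → ℂ) : Polynomial ℂ :=
  ∑ k ∈ Finset.Icc 1 N, Polynomial.C (u k) * Polynomial.X ^ k

open Polynomial in
/-- `T_{u,t}(X) = ∑_{k=1}^{N} conj(u k) t^k X^(N-k)`. -/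
def Tt (N : ℕ) (u : ℕ → ℂ) (t : ℝ) : Polynomial ℂ :=
  ∑ k ∈ Finset.Icc 1 N,
    Polynomial.C ((starRingEnd ℂ) (u k) * (t:ℂ) ^ k) * Polynomial.X ^ (N - k)

open Polynomial

lemma Pp_coeff (N : ℕ) (u : ℕ → ℂ) (d : ℕ) (hd : d ∈ Finset.Icc 1 N) :
    (Pp N u).coeff d = u d := by
  rw [Pp, finset_sum_coeff]
  rw [Finset.sum_congr rfl (fun k _ => by rw [coeff_C_mul, coeff_X_pow])]
  rw [Finset.sum_congr rfl (fun k _ => by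
    rw [show u k * (if d = k then (1:ℂ) else 0) = if k = d then u k else 0 by
      by_cases h : k = d
      · simp [h]
      · rw [if_neg h, if_neg (fun hc => h hc.symm), mul_zero]])]
  rw [Finset.sum_ite_eq' _ d u, if_pos hd]

lemma Pp_eval (N : ℕ) (u : ℕ → ℂ) (z : ℂ) :
    (Pp N u).eval z = ∑ k ∈ Finset.Icc 1 N, u k * z ^ k := by
  rw [Pp, eval_finset_sum]
  exact Finset.sum_congr rfl (fun k _ => by simp)

lemma Tt_eval (N : ℕ) (u : ℕ → ℂ) (t : ℝ) (z : ℂ) :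
    (Tt N u t).eval z
      = ∑ k ∈ Finset.Icc 1 N, (starRingEnd ℂ) (u k) * (t:ℂ) ^ k * z ^ (N - k) := by
  rw [Tt, eval_finset_sum]
  exact Finset.sum_congr rfl (fun k _ => by simp)

lemma Tt_coeff (N : ℕ) (u : ℕ → ℂ) (t : ℝ) (d : ℕ) :
    (Tt N u t).coeff d
      = if d < N then (starRingEnd ℂ) (u (N - d)) * (t:ℂ) ^ (N - d) else 0 := by
  rw [Tt, finset_sum_coeff]
  rw [Finset.sum_congr rfl (fun k _ => by rw [coeff_C_mul, coeff_X_pow])]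
  by_cases hd : d < N
  · rw [Finset.sum_congr rfl (fun k hk => by
      rw [show (starRingEnd ℂ) (u k) * (t:ℂ)^k * (if d = N - k then (1:ℂ) else 0)
          = if k = N - d then (starRingEnd ℂ) (u k) * (t:ℂ)^k else 0 by
        simp only [Finset.mem_Icc] at hk
        by_cases h : k = N - d
        · rw [if_pos h, if_pos (by omega)]; ring
        · rw [if_neg h, if_neg (by omega), mul_zero]])]
    rw [Finset.sum_ite_eq' _ (N - d) (fun k => (starRingEnd ℂ) (u k) * (t:ℂ)^k)]
    rw [if_pos (Finset.mem_Icc.2 (by omega)), if_pos hd]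
  · rw [if_neg hd]
    apply Finset.sum_eq_zero
    intro k hk
    simp only [Finset.mem_Icc] at hk
    rw [if_neg (by omega), mul_zero]

lemma Pp_natDegree_le (N : ℕ) (u : ℕ → ℂ) : (Pp N u).natDegree ≤ N := by
  apply natDegree_sum_le_of_forall_le
  intro k hk
  simp only [Finset.mem_Icc] at hk
  exact le_trans (natDegree_C_mul_X_pow_le _ _) hk.2

lemma Tt_natDegree_le (N : ℕ) (u : ℕ → ℂ) (t : ℝ) (hN : 0 < N) :
    (Tt N u t).natDegree ≤ N - 1 := by
  apply natDegree_sum_le_of_forall_le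
  intro k hk
  simp only [Finset.mem_Icc] at hk
  exact le_trans (natDegree_C_mul_X_pow_le _ _) (by omega)

lemma Pp_eq_zero_iff (N : ℕ) (u : ℕ → ℂ) :
    Pp N u = 0 ↔ ∀ k ∈ Finset.Icc 1 N, u k = 0 := by
  constructor
  · intro h k hk
    rw [← Pp_coeff N u k hk, h, coeff_zero]
  · intro h
    rw [Pp]
    apply Finset.sum_eq_zero
    intro k hk
    rw [h k hk, map_zero, zero_mul]

lemma Tt_eq_zero (N : ℕ) (u : ℕ → ℂ) (t : ℝ) (ht : t ≠ 0)
    (h : Tt N u t = 0) : ∀ k ∈ Finset.Icc 1 N, u k = 0 := by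
  intro k hk
  simp only [Finset.mem_Icc] at hk
  have hc := Tt_coeff N u t (N - k)
  rw [h, coeff_zero] at hc
  rw [if_pos (by omega), show N - (N - k) = k by omega] at hc
  have htC : (t:ℂ) ^ k ≠ 0 := pow_ne_zero _ (Complex.ofReal_ne_zero.2 ht)
  have := (mul_eq_zero.1 hc.symm).resolve_right htC
  simpa using this
lemma zpt_pow (n : ℕ) (hn0 : 0 < n) (r : ℝ) (s : Fin n) (k : ℕ) :
    ((r:ℂ) * Complex.exp (2*π*Complex.I*(s:ℕ)/n)) ^ k
      = (r:ℂ)^k * Complex.exp (2*π*Complex.I*(k:ℕ)*(s:ℕ)/n) := by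
  rw [mul_pow, ← Complex.exp_nat_mul]
  congr 2
  ring

lemma conj_zpt (n : ℕ) (r : ℝ) (s : Fin n) :
    (starRingEnd ℂ) ((r:ℂ) * Complex.exp (2*π*Complex.I*(s:ℕ)/n))
      = (r:ℂ) * Complex.exp (-(2*π*Complex.I*(s:ℕ)/n)) := by
  rw [map_mul, Complex.conj_ofReal, ← Complex.exp_conj]
  congr 1
  simp only [map_div₀, map_mul, Complex.conj_I, Complex.conj_ofReal, map_ofNat,
    Complex.conj_natCast]
  ring

lemma zpt_mul_conj (n : ℕ) (r : ℝ) (s : Fin n) :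
    ((r:ℂ) * Complex.exp (2*π*Complex.I*(s:ℕ)/n))
      * (starRingEnd ℂ) ((r:ℂ) * Complex.exp (2*π*Complex.I*(s:ℕ)/n)) = (r:ℂ)^2 := by
  rw [conj_zpt]
  rw [show ((r:ℂ) * Complex.exp (2*π*Complex.I*(s:ℕ)/n))
      * ((r:ℂ) * Complex.exp (-(2*π*Complex.I*(s:ℕ)/n)))
      = (r:ℂ)^2 * (Complex.exp (2*π*Complex.I*(s:ℕ)/n)
          * Complex.exp (-(2*π*Complex.I*(s:ℕ)/n))) by ring]
  rw [← Complex.exp_add, add_neg_cancel, Complex.exp_zero, mul_one]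

lemma zpt_inj (n : ℕ) (hn0 : 0 < n) (r : ℝ) (hr : 0 < r) :
    Function.Injective (fun s : Fin n => (r:ℂ) * Complex.exp (2*π*Complex.I*(s:ℕ)/n)) := by
  intro s₁ s₂ h
  simp only at h
  have hrC : (r:ℂ) ≠ 0 := Complex.ofReal_ne_zero.2 hr.ne'
  have hexp : Complex.exp (2*π*Complex.I*(s₁:ℕ)/n) = Complex.exp (2*π*Complex.I*(s₂:ℕ)/n) :=
    mul_left_cancel₀ hrC h
  have h1 : Complex.exp (2*π*Complex.I*(((((s₁:ℕ):ℤ) - ((s₂:ℕ):ℤ)):ℤ):ℂ)/n) = 1 := by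
    rw [show (2*π*Complex.I*(((((s₁:ℕ):ℤ) - ((s₂:ℕ):ℤ)):ℤ):ℂ)/n : ℂ)
        = 2*π*Complex.I*(s₁:ℕ)/n + (-(2*π*Complex.I*(s₂:ℕ)/n)) by push_cast; ring]
    rw [Complex.exp_add, hexp, ← Complex.exp_add, add_neg_cancel, Complex.exp_zero]
  have hdvd := (cexp_dvd_iff n hn0 _).1 h1
  have h1' : (s₁:ℕ) < n := s₁.2
  have h2' : (s₂:ℕ) < n := s₂.2
  have hzero : ((s₁:ℕ):ℤ) - ((s₂:ℕ):ℤ) = 0 :=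
    Int.eq_zero_of_abs_lt_dvd hdvd (abs_lt.2 ⟨by omega, by omega⟩)
  exact Fin.ext (by omega)

open Polynomial in
lemma prod_identity (n N : ℕ) (hn : n = 2*N) (hN : 0 < N) (u v : ℕ → ℂ) (r : ℝ) (hr : 0 < r)
    (hE : ∀ s : Fin n,
      ‖∑ k ∈ Finset.Icc 1 N, u k * (r:ℂ)^k * Complex.exp (2*π*Complex.I*(k:ℕ)*(s:ℕ)/n)‖
      = ‖∑ k ∈ Finset.Icc 1 N, v k * (r:ℂ)^k * Complex.exp (2*π*Complex.I*(k:ℕ)*(s:ℕ)/n)‖) :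
    Pp N u * Tt N u (r^2) = Pp N v * Tt N v (r^2) := by
  have hn0 : 0 < n := by omega
  set zpt : Fin n → ℂ := fun s => (r:ℂ) * Complex.exp (2*π*Complex.I*(s:ℕ)/n) with hzpt
  -- eval of Pp at zpt
  have hPp : ∀ (w : ℕ → ℂ) (s : Fin n), (Pp N w).eval (zpt s)
      = ∑ k ∈ Finset.Icc 1 N, w k * (r:ℂ)^k * Complex.exp (2*π*Complex.I*(k:ℕ)*(s:ℕ)/n) := by
    intro w s
    rw [Pp_eval]
    apply Finset.sum_congr rfl
    intro k _
    rw [hzpt, zpt_pow n hn0 r s k]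
    ring
  -- eval of Tt at zpt
  have hTt : ∀ (w : ℕ → ℂ) (s : Fin n), (Tt N w (r^2)).eval (zpt s)
      = (zpt s)^N * (starRingEnd ℂ) ((Pp N w).eval (zpt s)) := by
    intro w s
    rw [Tt_eval, Pp_eval, map_sum, Finset.mul_sum]
    apply Finset.sum_congr rfl
    intro k hk
    simp only [Finset.mem_Icc] at hk
    rw [map_mul, map_pow]
    have hrr : ((r^2 : ℝ):ℂ) = zpt s * (starRingEnd ℂ) (zpt s) := by
      rw [zpt_mul_conj n r s]; push_cast; ring
    rw [hrr, mul_pow]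
    rw [show (starRingEnd ℂ) (w k) * ((zpt s)^k * ((starRingEnd ℂ) (zpt s))^k) * (zpt s)^(N-k)
        = ((zpt s)^k * (zpt s)^(N-k)) * ((starRingEnd ℂ) (w k) * ((starRingEnd ℂ) (zpt s))^k)
        by ring]
    rw [← pow_add, show k + (N - k) = N by omega]
  -- the difference polynomial vanishes at all zpt s
  set D : Polynomial ℂ := Pp N u * Tt N u (r^2) - Pp N v * Tt N v (r^2) with hD
  have hvanish : ∀ s : Fin n, D.eval (zpt s) = 0 := by
    intro s
    rw [hD, eval_sub, eval_mul, eval_mul, hTt u s, hTt v s]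
    have hnorm := hE s
    rw [← hPp u s, ← hPp v s] at hnorm
    have h1 : (Pp N u).eval (zpt s) * ((zpt s)^N * (starRingEnd ℂ) ((Pp N u).eval (zpt s)))
        = (zpt s)^N * ((Complex.normSq ((Pp N u).eval (zpt s)) : ℝ) : ℂ) := by
      rw [← Complex.mul_conj]; ring
    have h2 : (Pp N v).eval (zpt s) * ((zpt s)^N * (starRingEnd ℂ) ((Pp N v).eval (zpt s)))
        = (zpt s)^N * ((Complex.normSq ((Pp N v).eval (zpt s)) : ℝ) : ℂ) := by
      rw [← Complex.mul_conj]; ring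
    rw [h1, h2]
    have h3 : Complex.normSq ((Pp N u).eval (zpt s)) = Complex.normSq ((Pp N v).eval (zpt s)) := by
      rw [Complex.normSq_eq_norm_sq, Complex.normSq_eq_norm_sq, hnorm]
    rw [h3, sub_self]
  -- degree bound
  have hdeg : D.natDegree < n := by
    have h1 : (Pp N u * Tt N u (r^2)).natDegree ≤ N + (N - 1) :=
      le_trans natDegree_mul_le (add_le_add (Pp_natDegree_le N u) (Tt_natDegree_le N u _ hN))
    have h2 : (Pp N v * Tt N v (r^2)).natDegree ≤ N + (N - 1) :=
      le_trans natDegree_mul_le (add_le_add (Pp_natDegree_le N v) (Tt_natDegree_le N v _ hN))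
    have h3 := natDegree_sub_le (Pp N u * Tt N u (r^2)) (Pp N v * Tt N v (r^2))
    rw [← hD] at h3
    omega
  have hDzero : D = 0 := by
    apply Polynomial.eq_zero_of_natDegree_lt_card_of_eval_eq_zero D
      (zpt_inj n hn0 r hr) hvanish
    rwa [Fintype.card_fin]
  have := sub_eq_zero.1 hDzero
  exact this

open Finset

/-- Scaling lemma: if `A(z) B(μz) = A(μz) B(z)` (as coefficient identities) with the powers
of `μ` injective and `A ≠ 0`, then `B = c • A`. -/
theorem scale_lemma (μ : ℂ) (hμ : ∀ i j : ℕ, μ ^ i = μ ^ j → i = j)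
    (A B : ℕ → ℂ) (hA : ∃ i, A i ≠ 0)
    (H : ∀ d : ℕ, ∑ x ∈ antidiagonal d, A x.1 * (B x.2 * μ ^ x.2)
        = ∑ x ∈ antidiagonal d, (A x.1 * μ ^ x.1) * B x.2) :
    ∃ c : ℂ, ∀ k, B k = c * A k := by
  classical
  have key : ∀ (B' : ℕ → ℂ),
      (∀ d : ℕ, ∑ x ∈ antidiagonal d, A x.1 * B' x.2 * (μ ^ x.2 - μ ^ x.1) = 0) →
      ∀ j₀, B' j₀ ≠ 0 → (∀ j' < j₀, B' j' = 0) → j₀ = Nat.find hA := by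
    intro B' hB' j₀ hj₀ hmin
    set i₀ := Nat.find hA with hi₀
    have hAi₀ : A i₀ ≠ 0 := Nat.find_spec hA
    have hd := hB' (i₀ + j₀)
    rw [Finset.sum_eq_single (i₀, j₀)] at hd
    · have h1 : μ ^ j₀ - μ ^ i₀ = 0 := by
        rcases mul_eq_zero.1 hd with h | h
        · rcases mul_eq_zero.1 h with h' | h'
          · exact absurd h' hAi₀
          · exact absurd h' hj₀
        · exact h
      exact hμ j₀ i₀ (sub_eq_zero.1 h1)
    · rintro ⟨i, j⟩ hmem hne
      simp only [Finset.HasAntidiagonal.mem_antidiagonal] at hmem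
      by_cases hi : i < i₀
      · have : A i = 0 := by
          by_contra hc
          have hle : i₀ ≤ i := Nat.find_le hc
          omega
        simp [this]
      · have hj : j < j₀ := by
          rcases Nat.lt_or_ge j j₀ with h | h
          · exact h
          · exfalso; apply hne
            have h1 : i = i₀ := by omega
            have h2 : j = j₀ := by omega
            simp [h1, h2]
        simp [hmin j hj]
    · intro h
      simp [Finset.HasAntidiagonal.mem_antidiagonal] at h
  -- rewrite H into subtracted form
  have H' : ∀ d : ℕ, ∑ x ∈ antidiagonal d, A x.1 * B x.2 * (μ ^ x.2 - μ ^ x.1) = 0 := by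
    intro d
    have := H d
    have h2 : ∑ x ∈ antidiagonal d, A x.1 * B x.2 * (μ ^ x.2 - μ ^ x.1)
        = (∑ x ∈ antidiagonal d, A x.1 * (B x.2 * μ ^ x.2))
          - ∑ x ∈ antidiagonal d, (A x.1 * μ ^ x.1) * B x.2 := by
      rw [← Finset.sum_sub_distrib]; apply Finset.sum_congr rfl; intros; ring
    rw [h2, this, sub_self]
  set i₀ := Nat.find hA with hi₀
  have hAi₀ : A i₀ ≠ 0 := Nat.find_spec hA
  refine ⟨B i₀ / A i₀, ?_⟩
  by_contra hcon
  push_neg at hcon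
  set c := B i₀ / A i₀ with hc
  have hB' : ∃ k, B k - c * A k ≠ 0 := by
    obtain ⟨k, hk⟩ := hcon
    exact ⟨k, sub_ne_zero.2 hk⟩
  set j₁ := Nat.find hB' with hj₁
  -- A-A antisymmetric sum vanishes
  have hAA : ∀ d : ℕ, ∑ x ∈ antidiagonal d, A x.1 * A x.2 * (μ ^ x.2 - μ ^ x.1) = 0 := by
    intro d
    have hswap : ∑ x ∈ antidiagonal d, A x.1 * A x.2 * (μ ^ x.2 - μ ^ x.1)
        = ∑ x ∈ antidiagonal d, A x.2 * A x.1 * (μ ^ x.1 - μ ^ x.2) := by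
      apply Finset.sum_nbij' (i := fun x : ℕ × ℕ => x.swap) (j := fun x : ℕ × ℕ => x.swap)
      · intro x hx
        simp only [Finset.HasAntidiagonal.mem_antidiagonal, Prod.fst_swap, Prod.snd_swap] at *; omega
      · intro x hx
        simp only [Finset.HasAntidiagonal.mem_antidiagonal, Prod.fst_swap, Prod.snd_swap] at *; omega
      · intro x _; simp
      · intro x _; simp
      · intro x _; simp [Prod.swap]
    have : (2:ℂ) * ∑ x ∈ antidiagonal d, A x.1 * A x.2 * (μ ^ x.2 - μ ^ x.1) = 0 := by
      rw [two_mul]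
      nth_rewrite 2 [hswap]
      rw [← Finset.sum_add_distrib]
      apply Finset.sum_eq_zero; intros; ring
    have h2 : (2:ℂ) ≠ 0 := two_ne_zero
    exact (mul_eq_zero.1 this).resolve_left h2
  have hlin : ∀ d : ℕ,
      ∑ x ∈ antidiagonal d, A x.1 * (B x.2 - c * A x.2) * (μ ^ x.2 - μ ^ x.1) = 0 := by
    intro d
    have : ∑ x ∈ antidiagonal d, A x.1 * (B x.2 - c * A x.2) * (μ ^ x.2 - μ ^ x.1)
        = (∑ x ∈ antidiagonal d, A x.1 * B x.2 * (μ ^ x.2 - μ ^ x.1))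
          - c * ∑ x ∈ antidiagonal d, A x.1 * A x.2 * (μ ^ x.2 - μ ^ x.1) := by
      rw [Finset.mul_sum, ← Finset.sum_sub_distrib]
      apply Finset.sum_congr rfl; intros; ring
    rw [this, H' d, hAA d]; ring
  have := key _ hlin j₁ (Nat.find_spec hB') (fun j' hj' => by
    by_contra hne
    have hle : j₁ ≤ j' := Nat.find_le hne
    omega)
  -- j₁ = i₀, but B i₀ - c * A i₀ = 0
  have : B j₁ - c * A j₁ = 0 := by
    rw [this, hc, div_mul_cancel₀ _ hAi₀, sub_self]
  exact absurd this (Nat.find_spec hB')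
lemma Tt_scale (N : ℕ) (w : ℕ → ℂ) (t₁ t₂ : ℝ) (h₁ : 0 < t₁) (h₂ : 0 < t₂) (d : ℕ) :
    (Tt N w t₂).coeff d
      = ((t₂:ℂ)/(t₁:ℂ))^N * ((t₁:ℂ)/(t₂:ℂ))^d * (Tt N w t₁).coeff d := by
  have h1C : (t₁:ℂ) ≠ 0 := Complex.ofReal_ne_zero.2 h₁.ne'
  have h2C : (t₂:ℂ) ≠ 0 := Complex.ofReal_ne_zero.2 h₂.ne'
  rw [Tt_coeff, Tt_coeff]
  by_cases hd : d < N
  · rw [if_pos hd, if_pos hd]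
    have e2 : (t₂:ℂ)^(N-d) * (t₂:ℂ)^d = (t₂:ℂ)^N := by rw [← pow_add]; congr 1; omega
    have e1 : (t₁:ℂ)^(N-d) * (t₁:ℂ)^d = (t₁:ℂ)^N := by rw [← pow_add]; congr 1; omega
    rw [div_pow, div_pow]
    field_simp
    rw [← e1, ← e2]
    ring
  · rw [if_neg hd, if_neg hd, mul_zero]

open Polynomial in
lemma spectral (n N : ℕ) (hn : n = 2*N) (hN : 0 < N) (u v : ℕ → ℂ)
    (r₁ r₂ : ℝ) (hr₁ : 0 < r₁) (hr₂ : 0 < r₂) (hrne : r₁ ≠ r₂)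
    (hE₁ : ∀ s : Fin n,
      ‖∑ k ∈ Finset.Icc 1 N, u k * (r₁:ℂ)^k * Complex.exp (2*π*Complex.I*(k:ℕ)*(s:ℕ)/n)‖
      = ‖∑ k ∈ Finset.Icc 1 N, v k * (r₁:ℂ)^k * Complex.exp (2*π*Complex.I*(k:ℕ)*(s:ℕ)/n)‖)
    (hE₂ : ∀ s : Fin n,
      ‖∑ k ∈ Finset.Icc 1 N, u k * (r₂:ℂ)^k * Complex.exp (2*π*Complex.I*(k:ℕ)*(s:ℕ)/n)‖
      = ‖∑ k ∈ Finset.Icc 1 N, v k * (r₂:ℂ)^k * Complex.exp (2*π*Complex.I*(k:ℕ)*(s:ℕ)/n)‖) :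
    ∃ φ : ℝ, ∀ k ∈ Finset.Icc 1 N, u k = Complex.exp (Complex.I * φ) * v k := by
  have H1 := prod_identity n N hn hN u v r₁ hr₁ hE₁
  have H2 := prod_identity n N hn hN u v r₂ hr₂ hE₂
  set t₁ := r₁^2 with ht₁def
  set t₂ := r₂^2 with ht₂def
  have h₁ : 0 < t₁ := by positivity
  have h₂ : 0 < t₂ := by positivity
  have htne : t₁ ≠ t₂ := by
    intro h
    have h' : (r₁ - r₂) * (r₁ + r₂) = 0 := by
      have : r₁^2 - r₂^2 = 0 := by rw [← ht₁def, ← ht₂def, h, sub_self]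
      nlinarith [this]
    rcases mul_eq_zero.1 h' with h'' | h''
    · exact hrne (by linarith)
    · linarith
  have h1C : (t₁:ℂ) ≠ 0 := Complex.ofReal_ne_zero.2 h₁.ne'
  have h2C : (t₂:ℂ) ≠ 0 := Complex.ofReal_ne_zero.2 h₂.ne'
  by_cases hu0 : ∀ k ∈ Finset.Icc 1 N, u k = 0
  · -- u vanishes, so v vanishes too
    have hPu : Pp N u = 0 := (Pp_eq_zero_iff N u).2 hu0
    rw [hPu, zero_mul] at H1
    have hv0 : ∀ k ∈ Finset.Icc 1 N, v k = 0 := by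
      rcases mul_eq_zero.1 H1.symm with h | h
      · exact (Pp_eq_zero_iff N v).1 h
      · exact Tt_eq_zero N v t₁ h₁.ne' h
    exact ⟨0, fun k hk => by
      rw [hu0 k hk, hv0 k hk, mul_zero]⟩
  push_neg at hu0
  obtain ⟨k₀, hk₀, hk₀ne⟩ := hu0
  have hPu : Pp N u ≠ 0 := fun h => hk₀ne ((Pp_eq_zero_iff N u).1 h k₀ hk₀)
  have hTu : Tt N u t₁ ≠ 0 := fun h => hk₀ne (Tt_eq_zero N u t₁ h₁.ne' h k₀ hk₀)
  -- v is nonzero too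
  have hv0 : ¬ (∀ k ∈ Finset.Icc 1 N, v k = 0) := by
    intro hv
    have hPv : Pp N v = 0 := (Pp_eq_zero_iff N v).2 hv
    rw [hPv, zero_mul] at H1
    rcases mul_eq_zero.1 H1 with h | h
    · exact hPu h
    · exact hTu h
  -- cross identity
  have key : Tt N u t₁ * Tt N v t₂ = Tt N u t₂ * Tt N v t₁ := by
    apply mul_left_cancel₀ hPu
    calc Pp N u * (Tt N u t₁ * Tt N v t₂) = (Pp N u * Tt N u t₁) * Tt N v t₂ := by ring
      _ = (Pp N v * Tt N v t₁) * Tt N v t₂ := by rw [H1]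
      _ = (Pp N v * Tt N v t₂) * Tt N v t₁ := by ring
      _ = (Pp N u * Tt N u t₂) * Tt N v t₁ := by rw [H2]
      _ = Pp N u * (Tt N u t₂ * Tt N v t₁) := by ring
  -- coefficient form
  set μ : ℂ := (t₁:ℂ)/(t₂:ℂ) with hμdef
  set ν : ℂ := (t₂:ℂ)/(t₁:ℂ) with hνdef
  have hνne : ν ≠ 0 := div_ne_zero h2C h1C
  set A : ℕ → ℂ := fun d => (Tt N u t₁).coeff d with hA
  set B : ℕ → ℂ := fun d => (Tt N v t₁).coeff d with hB
  have hcoeff : ∀ d : ℕ, ∑ x ∈ Finset.HasAntidiagonal.antidiagonal d, A x.1 * (B x.2 * μ ^ x.2)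
      = ∑ x ∈ Finset.HasAntidiagonal.antidiagonal d, (A x.1 * μ ^ x.1) * B x.2 := by
    intro d
    have hc := congrArg (fun P : Polynomial ℂ => P.coeff d) key
    simp only [coeff_mul] at hc
    have hl : ∑ x ∈ Finset.HasAntidiagonal.antidiagonal d, (Tt N u t₁).coeff x.1 * (Tt N v t₂).coeff x.2
        = ν^N * ∑ x ∈ Finset.HasAntidiagonal.antidiagonal d, A x.1 * (B x.2 * μ ^ x.2) := by
      rw [Finset.mul_sum]
      apply Finset.sum_congr rfl
      intro x _
      rw [Tt_scale N v t₁ t₂ h₁ h₂ x.2]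
      simp only [← hA, ← hB, ← hμdef, ← hνdef]
      ring
    have hr : ∑ x ∈ Finset.HasAntidiagonal.antidiagonal d, (Tt N u t₂).coeff x.1 * (Tt N v t₁).coeff x.2
        = ν^N * ∑ x ∈ Finset.HasAntidiagonal.antidiagonal d, (A x.1 * μ ^ x.1) * B x.2 := by
      rw [Finset.mul_sum]
      apply Finset.sum_congr rfl
      intro x _
      rw [Tt_scale N u t₁ t₂ h₁ h₂ x.1]
      simp only [← hA, ← hB, ← hμdef, ← hνdef]
      ring
    rw [hl, hr] at hc
    exact mul_left_cancel₀ (pow_ne_zero N hνne) hc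
  -- injectivity of powers of μ
  have hμinj : ∀ i j : ℕ, μ ^ i = μ ^ j → i = j := by
    intro i j hij
    set x : ℝ := t₁ / t₂ with hxdef
    have hx0 : 0 < x := div_pos h₁ h₂
    have hx1 : x ≠ 1 := by
      intro h
      exact htne (by rw [hxdef, div_eq_one_iff_eq h₂.ne'] at h; exact h)
    have hμx : μ = (x:ℂ) := by rw [hμdef, hxdef]; push_cast; ring
    rw [hμx, ← Complex.ofReal_pow, ← Complex.ofReal_pow] at hij
    have hijR : x ^ i = x ^ j := Complex.ofReal_injective hij
    have hlog : (i:ℝ) * Real.log x = (j:ℝ) * Real.log x := by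
      rw [← Real.log_pow, ← Real.log_pow, hijR]
    have hlogx : Real.log x ≠ 0 := by
      intro h
      rcases Real.log_eq_zero.1 h with h' | h' | h'
      · linarith
      · exact hx1 h'
      · linarith
    exact_mod_cast mul_right_cancel₀ hlogx hlog
  -- A is nonzero
  have hAne : ∃ d, A d ≠ 0 := by
    refine ⟨N - k₀, ?_⟩
    simp only [Finset.mem_Icc] at hk₀
    rw [hA]
    simp only []
    rw [Tt_coeff, if_pos (by omega), show N - (N - k₀) = k₀ by omega]
    exact mul_ne_zero (star_ne_zero.2 hk₀ne) (pow_ne_zero _ h1C)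
  obtain ⟨c, hc⟩ := scale_lemma μ hμinj A B hAne hcoeff
  -- extract v k = conj c * u k
  have hvk : ∀ k ∈ Finset.Icc 1 N, v k = (starRingEnd ℂ) c * u k := by
    intro k hk
    simp only [Finset.mem_Icc] at hk
    have hd := hc (N - k)
    rw [hA, hB] at hd
    simp only [] at hd
    rw [Tt_coeff, Tt_coeff, if_pos (by omega), if_pos (by omega),
      show N - (N - k) = k by omega] at hd
    have h' : (starRingEnd ℂ) (v k) = c * (starRingEnd ℂ) (u k) :=
      mul_right_cancel₀ (pow_ne_zero _ h1C) (by rw [hd]; ring)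
    have := congrArg (starRingEnd ℂ) h'
    simpa using this
  -- unimodularity
  have hPveq : Pp N v = C ((starRingEnd ℂ) c) * Pp N u := by
    rw [Pp, Pp, Finset.mul_sum]
    apply Finset.sum_congr rfl
    intro k hk
    rw [hvk k hk, map_mul]
    ring
  have hTveq : Tt N v t₁ = C c * Tt N u t₁ := by
    rw [Tt, Tt, Finset.mul_sum]
    apply Finset.sum_congr rfl
    intro k hk
    have hconj : (starRingEnd ℂ) (v k) = c * (starRingEnd ℂ) (u k) := by
      rw [hvk k hk, map_mul, Complex.conj_conj]
    rw [show (starRingEnd ℂ) (v k) * ((t₁:ℝ):ℂ)^k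
        = c * ((starRingEnd ℂ) (u k) * ((t₁:ℝ):ℂ)^k) by rw [hconj]; ring]
    rw [map_mul]
    ring
  have hcc : c * (starRingEnd ℂ) c = 1 := by
    have := H1
    rw [hPveq, hTveq] at this
    have h2 : (1 - C (c * (starRingEnd ℂ) c)) * (Pp N u * Tt N u t₁) = 0 := by
      rw [sub_mul, one_mul]
      rw [show C (c * (starRingEnd ℂ) c) * (Pp N u * Tt N u t₁)
          = C ((starRingEnd ℂ) c) * Pp N u * (C c * Tt N u t₁) by
        rw [map_mul]; ring]
      rw [← this, sub_self]
    rcases mul_eq_zero.1 h2 with h | h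
    · have : C (c * (starRingEnd ℂ) c) = C 1 := by
        rw [map_one]
        linear_combination -h
      exact Polynomial.C_injective this
    · exact absurd h (mul_ne_zero hPu hTu)
  have habs : ‖c‖ = 1 := by
    have hns : Complex.normSq c = 1 := by
      have := Complex.mul_conj c
      rw [hcc] at this
      exact_mod_cast this.symm
    rw [Complex.norm_def, hns, Real.sqrt_one]
  refine ⟨c.arg, fun k hk => ?_⟩
  have hcexp : Complex.exp (Complex.I * c.arg) = c := by
    have := Complex.norm_mul_exp_arg_mul_I c
    rw [habs] at this
    rw [mul_comm]
    simpa using this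
  rw [hcexp, hvk k hk, ← mul_assoc, hcc, one_mul]
lemma rho_scale (a : ℝ) (ha : 1 < a) (ρ : ℝ → ℂ)
    (hper : ∀ x : ℝ, 0 ≤ x → ρ (a * x) = ρ x) :
    ∀ (j : ℤ) (x : ℝ), 0 ≤ x → ρ (a ^ j * x) = ρ x := by
  have ha0 : (0:ℝ) < a := lt_trans zero_lt_one ha
  intro j
  induction j using Int.induction_on with
  | zero => intro x hx; rw [zpow_zero, one_mul]
  | succ i ih =>
    intro x hx
    have h1 : a ^ ((i:ℤ) + 1) * x = a * (a ^ (i:ℤ) * x) := by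
      rw [zpow_add_one₀ ha0.ne']; ring
    rw [h1, hper _ (by positivity), ih x hx]
  | pred i ih =>
    intro x hx
    have h1 : a * (a ^ (-(i:ℤ) - 1) * x) = a ^ (-(i:ℤ)) * x := by
      rw [show (-(i:ℤ)) = (-(i:ℤ) - 1) + 1 by ring, zpow_add_one₀ ha0.ne']; ring
    have h2 := hper (a ^ (-(i:ℤ) - 1) * x) (by positivity)
    rw [h1] at h2
    rw [← h2]
    exact ih x hx

/-- the weighted positive-frequency coefficients -/
def uvec (n : ℕ) (p : ℝ) (ρ : ℝ → ℂ) (f : Fin n → ℂ) (k : ℕ) : ℂ :=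
  ρ k * ((((k:ℝ) ^ p : ℝ)) : ℂ) * dft n f k

lemma dConv_eq (n N : ℕ) (hn : n = 2*N) (hN : 0 < N) (a p : ℝ) (ha : 1 < a) (hp : 0 < p)
    (ρ : ℝ → ℂ) (hper : ∀ x : ℝ, 0 ≤ x → ρ (a * x) = ρ x)
    (j : ℤ) (f : Fin n → ℂ) (s : Fin n) :
    dConv n a p ρ j f s = (((a ^ j) ^ p / n : ℝ) : ℂ) *
      ∑ k ∈ Finset.Icc 1 N, uvec n p ρ f k * ((Real.exp (-(a ^ j)) : ℝ) : ℂ)^k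
        * Complex.exp (2*π*Complex.I*(k:ℕ)*(s:ℕ)/n) := by
  have ha0 : (0:ℝ) < a := lt_trans zero_lt_one ha
  have haj : (0:ℝ) < a ^ j := zpow_pos ha0 j
  rw [dConv, idft]
  have hNZ : ((n:ℤ))/2 = (N:ℤ) := by omega
  have hsub : Finset.Icc (1:ℤ) (N:ℤ) ⊆ freqs n := by
    intro k hk
    simp only [Finset.mem_Icc] at hk
    simp only [freqs, Finset.mem_Icc, hNZ]
    omega
  have hzero : ∀ k ∈ freqs n, k ∉ Finset.Icc (1:ℤ) (N:ℤ) →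
      dft n f k * dCauchyHat a p ρ j k * Complex.exp (2*π*Complex.I*k*(s:ℕ)/n) = 0 := by
    intro k hkf hk
    simp only [freqs, Finset.mem_Icc, hNZ] at hkf
    simp only [Finset.mem_Icc] at hk
    have hk0 : k ≤ 0 := by omega
    rcases lt_or_eq_of_le hk0 with h | h
    · rw [dCauchyHat, if_neg (by omega), mul_zero, zero_mul]
    · subst h
      rw [dCauchyHat, if_pos le_rfl]
      rw [show ((0:ℤ):ℝ) = (0:ℝ) by norm_num, mul_zero, Real.zero_rpow hp.ne']
      norm_num
  have hres : ∑ k ∈ freqs n, dft n f k * dCauchyHat a p ρ j k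
        * Complex.exp (2*π*Complex.I*k*(s:ℕ)/n)
      = ∑ k ∈ Finset.Icc (1:ℤ) (N:ℤ), dft n f k * dCauchyHat a p ρ j k
        * Complex.exp (2*π*Complex.I*k*(s:ℕ)/n) :=
    (Finset.sum_subset hsub hzero).symm
  have hsummand : ∀ (k : ℤ), k ∈ Finset.Icc (1:ℤ) (N:ℤ) →
      dft n f k * dCauchyHat a p ρ j k * Complex.exp (2*π*Complex.I*k*(s:ℕ)/n)
      = ((a^j)^p : ℝ) * (uvec n p ρ f k.toNat
          * ((Real.exp (-(a ^ j)) : ℝ) : ℂ)^(k.toNat)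
          * Complex.exp (2*π*Complex.I*(k.toNat:ℕ)*(s:ℕ)/n)) := by
    intro k hk
    simp only [Finset.mem_Icc] at hk
    have hkpos : (0:ℝ) ≤ (k:ℝ) := by exact_mod_cast le_trans zero_le_one hk.1
    have hk0 : (0:ℤ) ≤ k := by omega
    have hcastR : ((k.toNat : ℕ) : ℝ) = (k : ℝ) := by exact_mod_cast Int.toNat_of_nonneg hk0
    have hcastC : ((k.toNat : ℕ) : ℂ) = (k : ℂ) := by exact_mod_cast Int.toNat_of_nonneg hk0
    have hcastZ : ((k.toNat : ℕ) : ℤ) = k := Int.toNat_of_nonneg hk0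
    have hCau : dCauchyHat a p ρ j k
        = ρ (k:ℝ) * ((((a^j)^p * (k:ℝ)^p : ℝ)):ℂ)
          * ((Real.exp (-(a^j)) ^ (k.toNat) : ℝ) : ℂ) := by
      rw [dCauchyHat, if_pos (by omega)]
      rw [rho_scale a ha ρ hper j (k:ℝ) hkpos]
      rw [Real.mul_rpow haj.le hkpos]
      congr 2
      rw [show -(a^j * (k:ℝ)) = (k.toNat : ℕ) * (-(a^j)) by rw [hcastR]; ring]
      rw [Real.exp_nat_mul]
    rw [hCau, uvec]
    rw [hcastR, hcastZ, hcastC]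
    push_cast
    ring
  rw [hres, Finset.sum_congr rfl hsummand]
  have hbij : ∑ k ∈ Finset.Icc (1:ℤ) (N:ℤ), (((a^j)^p : ℝ):ℂ) * (uvec n p ρ f k.toNat
          * ((Real.exp (-(a ^ j)) : ℝ) : ℂ)^(k.toNat)
          * Complex.exp (2*π*Complex.I*(k.toNat:ℕ)*(s:ℕ)/n))
      = ∑ k ∈ Finset.Icc 1 N, (((a^j)^p : ℝ):ℂ) * (uvec n p ρ f k
          * ((Real.exp (-(a ^ j)) : ℝ) : ℂ)^k
          * Complex.exp (2*π*Complex.I*(k:ℕ)*(s:ℕ)/n)) := by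
    apply Finset.sum_nbij' (i := fun k : ℤ => k.toNat) (j := fun k : ℕ => (k:ℤ))
    · intro x hx; simp only [Finset.mem_Icc] at *; omega
    · intro x hx; simp only [Finset.mem_Icc] at *; omega
    · intro x hx; simp only [Finset.mem_Icc] at hx; omega
    · intro x hx; simp only [Finset.mem_Icc] at hx; omega
    · intro x hx; rfl
  rw [hbij, ← Finset.mul_sum]
  push_cast
  ring
lemma norm_dConv_iff (n N : ℕ) (hn : n = 2*N) (hN : 0 < N) (a p : ℝ) (ha : 1 < a)
    (hp : 0 < p) (ρ : ℝ → ℂ) (hper : ∀ x : ℝ, 0 ≤ x → ρ (a * x) = ρ x)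
    (j : ℤ) (f g : Fin n → ℂ) :
    (∀ s : Fin n, ‖dConv n a p ρ j f s‖ = ‖dConv n a p ρ j g s‖) ↔
    (∀ s : Fin n, ‖∑ k ∈ Finset.Icc 1 N, uvec n p ρ f k * ((Real.exp (-(a^j)) : ℝ):ℂ)^k
        * Complex.exp (2*π*Complex.I*(k:ℕ)*(s:ℕ)/n)‖
      = ‖∑ k ∈ Finset.Icc 1 N, uvec n p ρ g k * ((Real.exp (-(a^j)) : ℝ):ℂ)^k
        * Complex.exp (2*π*Complex.I*(k:ℕ)*(s:ℕ)/n)‖) := by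
  have ha0 : (0:ℝ) < a := lt_trans zero_lt_one ha
  have hpos : (0:ℝ) < (a^j)^p / n := by
    apply div_pos (Real.rpow_pos_of_pos (zpow_pos ha0 j) p)
    exact_mod_cast (by omega : 0 < n)
  have hfac : ∀ (w : Fin n → ℂ) (s : Fin n), ‖dConv n a p ρ j w s‖
      = ((a^j)^p / n) * ‖∑ k ∈ Finset.Icc 1 N, uvec n p ρ w k
          * ((Real.exp (-(a^j)) : ℝ):ℂ)^k * Complex.exp (2*π*Complex.I*(k:ℕ)*(s:ℕ)/n)‖ := by
    intro w s
    rw [dConv_eq n N hn hN a p ha hp ρ hper j w s, norm_mul, Complex.norm_real,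
      Real.norm_eq_abs, abs_of_pos hpos]
  constructor
  · intro h s
    have hs := h s
    rw [hfac f s, hfac g s] at hs
    exact mul_left_cancel₀ hpos.ne' hs
  · intro h s
    rw [hfac f s, hfac g s, h s]

lemma analytic_of_coeff (n N : ℕ) (hn : n = 2*N) (hN : 0 < N) (f g : Fin n → ℂ) (φ : ℝ)
    (hk : ∀ k ∈ Finset.Icc 1 N, dft n f (k:ℤ)
      = Complex.exp (Complex.I*φ) * dft n g (k:ℤ)) :
    ∃ c : ℂ, ∀ s : Fin n, dAnalyticPart n f s
      = Complex.exp (Complex.I*φ) * dAnalyticPart n g s + c := by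
  set e := Complex.exp (Complex.I*φ) with he
  set W : ℤ → ℂ := fun k => if k < 0 then 0 else if k = 0 ∨ k = (n:ℤ)/2 then 1 else 2 with hW
  refine ⟨(1/(n:ℂ)) * (dft n f 0 - e * dft n g 0), fun s => ?_⟩
  rw [dAnalyticPart, dAnalyticPart, idft, idft]
  have hsub : (∑ k ∈ freqs n, (W k * dft n f k) * Complex.exp (2*π*Complex.I*k*(s:ℕ)/n))
      - e * ∑ k ∈ freqs n, (W k * dft n g k) * Complex.exp (2*π*Complex.I*k*(s:ℕ)/n)
      = ∑ k ∈ freqs n, W k * (dft n f k - e * dft n g k)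
          * Complex.exp (2*π*Complex.I*k*(s:ℕ)/n) := by
    rw [Finset.mul_sum, ← Finset.sum_sub_distrib]
    apply Finset.sum_congr rfl
    intros; ring
  have hsingle : ∑ k ∈ freqs n, W k * (dft n f k - e * dft n g k)
        * Complex.exp (2*π*Complex.I*k*(s:ℕ)/n)
      = dft n f 0 - e * dft n g 0 := by
    rw [Finset.sum_eq_single (0:ℤ)]
    · rw [hW]
      norm_num
    · intro k hkf hne
      by_cases hneg : k < 0
      · rw [hW]; simp only [if_pos hneg]; ring
      · have hkb : k ∈ Finset.Icc (-(n:ℤ)/2 + 1) ((n:ℤ)/2) := hkf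
        simp only [Finset.mem_Icc] at hkb
        have hk1 : 1 ≤ k := by omega
        have hk2 : k ≤ (N:ℤ) := by omega
        have hcast : ((k.toNat:ℕ):ℤ) = k := Int.toNat_of_nonneg (by omega)
        have := hk k.toNat (Finset.mem_Icc.2 (by omega))
        rw [hcast] at this
        rw [this, sub_self, mul_zero, zero_mul]
    · intro h0
      exfalso
      apply h0
      simp only [freqs, Finset.mem_Icc]
      omega
  linear_combination (1/(n:ℂ)) * (hsub.trans hsingle)

lemma coeff_of_analytic (n N : ℕ) (hn : n = 2*N) (hN : 0 < N) (f g : Fin n → ℂ)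
    (φ : ℝ) (c : ℂ)
    (h : ∀ s : Fin n, dAnalyticPart n f s
      = Complex.exp (Complex.I*φ) * dAnalyticPart n g s + c) :
    ∀ k ∈ Finset.Icc 1 N, dft n f (k:ℤ)
      = Complex.exp (Complex.I*φ) * dft n g (k:ℤ) := by
  have hn0 : 0 < n := by omega
  set e := Complex.exp (Complex.I*φ) with he
  set W : ℤ → ℂ := fun k => if k < 0 then 0 else if k = 0 ∨ k = (n:ℤ)/2 then 1 else 2 with hW
  intro k hk
  simp only [Finset.mem_Icc] at hk
  have hkfreq : ((k:ℤ)) ∈ freqs n := by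
    simp only [freqs, Finset.mem_Icc]; omega
  have h1 : dft n (dAnalyticPart n f) (k:ℤ) = W k * dft n f k :=
    dft_idft n hn0 (fun k' => W k' * dft n f k') (k:ℤ) hkfreq
  have h1g : dft n (dAnalyticPart n g) (k:ℤ) = W k * dft n g k :=
    dft_idft n hn0 (fun k' => W k' * dft n g k') (k:ℤ) hkfreq
  have hzero : ∑ s : Fin n, Complex.exp (-2*π*Complex.I*(s:ℕ)*(k:ℤ)/n) = 0 := by
    have hc : ∀ s : Fin n, Complex.exp (-2*π*Complex.I*(s:ℕ)*(k:ℤ)/n)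
        = Complex.exp (2*π*Complex.I*((-(k:ℤ) : ℤ):ℂ)*(s:ℕ)/n) := by
      intro s; congr 1; push_cast; ring
    rw [Finset.sum_congr rfl (fun s _ => hc s), sum_cexp n hn0 (-(k:ℤ))]
    rw [if_neg]
    intro hdvd
    have := Int.eq_zero_of_abs_lt_dvd hdvd (by
      rw [abs_lt]; constructor <;> omega)
    omega
  have h2 : dft n (dAnalyticPart n f) (k:ℤ)
      = e * dft n (dAnalyticPart n g) (k:ℤ) := by
    rw [dft, dft, Finset.mul_sum]
    rw [Finset.sum_congr rfl (fun s _ => by rw [h s])]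
    rw [show ∑ s : Fin n, (e * dAnalyticPart n g s + c)
          * Complex.exp (-2*π*Complex.I*(s:ℕ)*(k:ℤ)/n)
        = (∑ s : Fin n, e * (dAnalyticPart n g s
            * Complex.exp (-2*π*Complex.I*(s:ℕ)*(k:ℤ)/n)))
          + c * ∑ s : Fin n, Complex.exp (-2*π*Complex.I*(s:ℕ)*(k:ℤ)/n) by
      rw [Finset.mul_sum, ← Finset.sum_add_distrib]
      apply Finset.sum_congr rfl
      intros; ring]
    rw [hzero, mul_zero, add_zero]
  rw [h1, h1g] at h2
  have hWne : W (k:ℤ) ≠ 0 := by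
    rw [hW]
    simp only
    rw [if_neg (by omega)]
    by_cases h' : (k:ℤ) = 0 ∨ (k:ℤ) = (n:ℤ)/2
    · rw [if_pos h']; exact one_ne_zero
    · rw [if_neg h']; exact two_ne_zero
  apply mul_left_cancel₀ hWne
  rw [h2]; ring

/-- **Discrete uniqueness theorem for the Cauchy wavelet transform.**
For `n` even and discrete Cauchy wavelets, the moduli of the wavelet transforms of
`f, g ∈ ℂⁿ` agree at two distinct scales `j ≠ l` if and only if the analytic parts
satisfy `f₊ = e^{iφ} g₊ + c` for some `φ ∈ ℝ`, `c ∈ ℂ`. -/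
theorem stmt3 (n : ℕ) (hn : Even n) (hn0 : 0 < n) (a p : ℝ) (ha : 1 < a) (hp : 0 < p)
    (ρ : ℝ → ℂ) (hρ_per : ∀ x : ℝ, 0 ≤ x → ρ (a * x) = ρ x)
    (hρ_ne : ∀ x : ℝ, 0 ≤ x → ρ x ≠ 0)
    (f g : Fin n → ℂ) (j l : ℤ) (hjl : j ≠ l) :
    ((∀ s : Fin n, ‖dConv n a p ρ j f s‖ = ‖dConv n a p ρ j g s‖) ∧
     (∀ s : Fin n, ‖dConv n a p ρ l f s‖ = ‖dConv n a p ρ l g s‖)) ↔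
    (∃ (φ : ℝ) (c : ℂ), ∀ s : Fin n,
      dAnalyticPart n f s = Complex.exp (Complex.I * φ) * dAnalyticPart n g s + c) := by
  have ha0 : (0:ℝ) < a := lt_trans zero_lt_one ha
  set N := n / 2 with hNdef
  have hn2 : n = 2 * N := by
    rcases hn with ⟨m, hm⟩; omega
  have hN : 0 < N := by omega
  set r₁ := Real.exp (-(a^j)) with hr₁
  set r₂ := Real.exp (-(a^l)) with hr₂
  have hr₁0 : 0 < r₁ := Real.exp_pos _
  have hr₂0 : 0 < r₂ := Real.exp_pos _
  have hrne : r₁ ≠ r₂ := by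
    intro h
    apply hjl
    have h2 : -(a^j) = -(a^l) := Real.exp_eq_exp.1 h
    have h3 : a^j = a^l := by linarith
    exact zpow_right_injective₀ ha0 ha.ne' h3
  -- coefficient cancellation helper
  have hcancel : ∀ (φ : ℝ),
      (∀ k ∈ Finset.Icc 1 N, uvec n p ρ f k = Complex.exp (Complex.I*φ) * uvec n p ρ g k)
      ↔ (∀ k ∈ Finset.Icc 1 N, dft n f (k:ℤ)
          = Complex.exp (Complex.I*φ) * dft n g (k:ℤ)) := by
    intro φ
    have hfac : ∀ k ∈ Finset.Icc 1 N, ρ (k:ℝ) * (((k:ℝ)^p : ℝ):ℂ) ≠ 0 := by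
      intro k hk
      simp only [Finset.mem_Icc] at hk
      have hk0 : (0:ℝ) < (k:ℝ) := by exact_mod_cast hk.1
      exact mul_ne_zero (hρ_ne (k:ℝ) hk0.le)
        (Complex.ofReal_ne_zero.2 (Real.rpow_pos_of_pos hk0 p).ne')
    constructor
    · intro h k hk
      have := h k hk
      rw [uvec, uvec] at this
      apply mul_left_cancel₀ (hfac k hk)
      rw [mul_assoc] at this ⊢
      rw [this]
      ring
    · intro h k hk
      rw [uvec, uvec, h k hk]
      ring
  constructor
  · rintro ⟨Hj, Hl⟩
    rw [norm_dConv_iff n N hn2 hN a p ha hp ρ hρ_per j f g] at Hj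
    rw [norm_dConv_iff n N hn2 hN a p ha hp ρ hρ_per l f g] at Hl
    obtain ⟨φ, hφ⟩ := spectral n N hn2 hN (uvec n p ρ f) (uvec n p ρ g)
      r₁ r₂ hr₁0 hr₂0 hrne Hj Hl
    have hdft := (hcancel φ).1 hφ
    obtain ⟨c, hc⟩ := analytic_of_coeff n N hn2 hN f g φ hdft
    exact ⟨φ, c, hc⟩
  · rintro ⟨φ, c, hc⟩
    have hdft := coeff_of_analytic n N hn2 hN f g φ c hc
    have huv := (hcancel φ).2 hdft
    have hnormE : ‖Complex.exp (Complex.I*φ)‖ = 1 := by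
      rw [mul_comm, Complex.norm_exp_ofReal_mul_I]
    have hconv : ∀ (j' : ℤ) (s : Fin n),
        ‖dConv n a p ρ j' f s‖ = ‖dConv n a p ρ j' g s‖ := by
      intro j'
      rw [norm_dConv_iff n N hn2 hN a p ha hp ρ hρ_per j' f g]
      intro s'
      have hsum : ∑ k ∈ Finset.Icc 1 N, uvec n p ρ f k
            * ((Real.exp (-(a^j')) : ℝ):ℂ)^k * Complex.exp (2*π*Complex.I*(k:ℕ)*(s':ℕ)/n)
          = Complex.exp (Complex.I*φ) * ∑ k ∈ Finset.Icc 1 N, uvec n p ρ g k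
            * ((Real.exp (-(a^j')) : ℝ):ℂ)^k
            * Complex.exp (2*π*Complex.I*(k:ℕ)*(s':ℕ)/n) := by
        rw [Finset.mul_sum]
        apply Finset.sum_congr rfl
        intro k hk
        rw [huv k hk]
        ring
      rw [hsum, norm_mul, hnormE, one_mul]
    exact ⟨fun s => hconv j s, fun s => hconv l s⟩
end
end

section
/- Let F, G be polynomials with complex coefficients, let a > 1, and let j ≠ l be integers. Suppose F(e^{-a^j} z) · conj(F)(e^{-a^j}/z) = G(e^{-a^j} z) · conj(G)(e^{-a^j}/z) and F(e^{-a^l} z) · conj(F)(e^{-a^l}/z) = G(e^{-a^l} z) · conj(G)(e^{-a^l}/z) for all z ∈ ℂ \ {0}. Then F = e^{iφ} G for some φ ∈ ℝ. -/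
open Complex Polynomial

/-- Auxiliary: choose a point avoiding roots of two polynomials at scaled arguments. -/
lemma exists_good_point (p q : Polynomial ℂ) (hp : p ≠ 0) (hq : q ≠ 0) (r1 r2 : ℂ)
    (hr1 : r1 ≠ 0) (hr2 : r2 ≠ 0) :
    ∃ z : ℂ, z ≠ 0 ∧ p.eval (r1 * z) ≠ 0 ∧ q.eval (r2 / z) ≠ 0 := by
  have h1 : {z : ℂ | p.eval (r1 * z) = 0}.Finite := by
    have hfin := Polynomial.finite_setOf_isRoot (p := p) hp
    have : {z : ℂ | p.eval (r1 * z) = 0} = (fun z : ℂ => r1 * z) ⁻¹' {x | p.IsRoot x} := rfl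
    rw [this]
    exact Set.Finite.preimage (fun x _ y _ hxy => mul_left_cancel₀ hr1 hxy) hfin
  have h2 : {z : ℂ | q.eval (r2 / z) = 0}.Finite := by
    have hfin := Polynomial.finite_setOf_isRoot (p := q) hq
    have : {z : ℂ | q.eval (r2 / z) = 0} = (fun z : ℂ => r2 / z) ⁻¹' {x | q.IsRoot x} := rfl
    rw [this]
    refine Set.Finite.preimage ?_ hfin
    intro x _ y _ hxy
    rcases eq_or_ne x 0 with rfl | hx
    · simp only [div_zero] at hxy
      rcases (div_eq_zero_iff.mp hxy.symm) with h | h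
      · exact absurd h hr2
      · exact h.symm
    · rcases eq_or_ne y 0 with rfl | hy
      · simp only [div_zero] at hxy
        rcases (div_eq_zero_iff.mp hxy) with h | h
        · exact absurd h hr2
        · exact h
      · rw [div_eq_div_iff hx hy] at hxy
        exact (mul_left_cancel₀ hr2 hxy).symm
  have hfin : ({(0 : ℂ)} ∪ ({z : ℂ | p.eval (r1 * z) = 0} ∪ {z : ℂ | q.eval (r2 / z) = 0})).Finite :=
    (Set.finite_singleton 0).union (h1.union h2)
  have hinf := hfin.infinite_compl
  obtain ⟨z, hz⟩ := hinf.nonempty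
  simp only [Set.mem_compl_iff, Set.mem_union, Set.mem_singleton_iff, Set.mem_setOf_eq,
    not_or] at hz
  exact ⟨z, hz.1, hz.2.1, hz.2.2⟩

/-- Core algebraic rigidity: if `Q(X) P(λX) = P(X) Q(λX)` with `λ` having injective powers,
then `P` and `Q` are proportional. -/
lemma core_prop (P Q : Polynomial ℂ) (lam : ℂ)
    (hlam : ∀ m n : ℕ, lam ^ m = lam ^ n → m = n)
    (h : Q * P.comp (Polynomial.C lam * Polynomial.X) =
        P * Q.comp (Polynomial.C lam * Polynomial.X)) :
    Q.leadingCoeff • P = P.leadingCoeff • Q := by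
  have hl0 : lam ≠ 0 := by
    intro h0
    have := hlam 1 2 (by simp [h0])
    omega
  have hdq : (Polynomial.C lam * Polynomial.X : Polynomial ℂ).natDegree = 1 :=
    Polynomial.natDegree_C_mul_X lam hl0
  have hlc : (Polynomial.C lam * Polynomial.X : Polynomial ℂ).leadingCoeff = lam := by
    rw [Polynomial.leadingCoeff, hdq]
    simp
  have hcomp_lead : ∀ p : Polynomial ℂ,
      (p.comp (Polynomial.C lam * Polynomial.X)).leadingCoeff
        = p.leadingCoeff * lam ^ p.natDegree := by
    intro p
    rw [Polynomial.leadingCoeff_comp (by rw [hdq]; exact one_ne_zero), hlc]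
  by_cases hP : P = 0
  · simp [hP]
  by_cases hQ : Q = 0
  · simp [hQ]
  have hPl : P.leadingCoeff ≠ 0 := Polynomial.leadingCoeff_ne_zero.mpr hP
  have hQl : Q.leadingCoeff ≠ 0 := Polynomial.leadingCoeff_ne_zero.mpr hQ
  have hdeg : P.natDegree = Q.natDegree := by
    have hlead := congrArg Polynomial.leadingCoeff h
    rw [Polynomial.leadingCoeff_mul, Polynomial.leadingCoeff_mul, hcomp_lead, hcomp_lead]
      at hlead
    refine hlam _ _ ?_
    apply mul_left_cancel₀ (mul_ne_zero hQl hPl)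
    linear_combination hlead
  set D : Polynomial ℂ := Q.leadingCoeff • P - P.leadingCoeff • Q with hDdef
  have hDcomp : Q * D.comp (Polynomial.C lam * Polynomial.X)
      = D * Q.comp (Polynomial.C lam * Polynomial.X) := by
    simp only [hDdef, Polynomial.smul_eq_C_mul, Polynomial.sub_comp, Polynomial.mul_comp,
      Polynomial.C_comp]
    linear_combination Polynomial.C Q.leadingCoeff * h
  have hD0 : D = 0 := by
    by_contra hne
    have hDl : D.leadingCoeff ≠ 0 := Polynomial.leadingCoeff_ne_zero.mpr hne
    have hlead := congrArg Polynomial.leadingCoeff hDcomp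
    rw [Polynomial.leadingCoeff_mul, Polynomial.leadingCoeff_mul, hcomp_lead, hcomp_lead]
      at hlead
    have hpow : lam ^ D.natDegree = lam ^ Q.natDegree := by
      apply mul_left_cancel₀ (mul_ne_zero hQl hDl)
      linear_combination hlead
    have hdd : D.natDegree = Q.natDegree := hlam _ _ hpow
    apply hDl
    rw [← Polynomial.coeff_natDegree, hdd, hDdef]
    simp only [Polynomial.coeff_sub, Polynomial.coeff_smul, smul_eq_mul]
    rw [← hdeg, Polynomial.coeff_natDegree, hdeg, Polynomial.coeff_natDegree]
    ring
  have := sub_eq_zero.mp hD0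
  exact this

/-- **Equality of polynomial "modulus data" on two circles forces equality up to phase.**
If `F(e^{-a^j} z) conj(F)(e^{-a^j}/z) = G(e^{-a^j} z) conj(G)(e^{-a^j}/z)` for all
`z ≠ 0`, and the same at a second scale `l ≠ j`, then `F = e^{iφ} G` for some real `φ`.
Here `conj(P)` is the polynomial with conjugated coefficients. -/
theorem stmt5 (F G : Polynomial ℂ) (a : ℝ) (ha : 1 < a) (j l : ℤ) (hjl : j ≠ l)
    (h1 : ∀ z : ℂ, z ≠ 0 →
      F.eval ((Real.exp (-(a ^ j)) : ℂ) * z) *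
        (F.map (starRingEnd ℂ)).eval ((Real.exp (-(a ^ j)) : ℂ) / z) =
      G.eval ((Real.exp (-(a ^ j)) : ℂ) * z) *
        (G.map (starRingEnd ℂ)).eval ((Real.exp (-(a ^ j)) : ℂ) / z))
    (h2 : ∀ z : ℂ, z ≠ 0 →
      F.eval ((Real.exp (-(a ^ l)) : ℂ) * z) *
        (F.map (starRingEnd ℂ)).eval ((Real.exp (-(a ^ l)) : ℂ) / z) =
      G.eval ((Real.exp (-(a ^ l)) : ℂ) * z) *
        (G.map (starRingEnd ℂ)).eval ((Real.exp (-(a ^ l)) : ℂ) / z)) :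
    ∃ φ : ℝ, F = Polynomial.C (Complex.exp (Complex.I * φ)) * G := by
  set r : ℂ := ((Real.exp (-(a ^ j)) : ℝ) : ℂ) with hrdef
  set s : ℂ := ((Real.exp (-(a ^ l)) : ℝ) : ℂ) with hsdef
  have hr : r ≠ 0 := Complex.ofReal_ne_zero.mpr (Real.exp_ne_zero _)
  have hs : s ≠ 0 := Complex.ofReal_ne_zero.mpr (Real.exp_ne_zero _)
  set Fc : Polynomial ℂ := F.map (starRingEnd ℂ) with hFcdef
  set Gc : Polynomial ℂ := G.map (starRingEnd ℂ) with hGcdef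
  by_cases hG : G = 0
  · -- then F = 0
    have hF : F = 0 := by
      by_contra hF
      have hFc : Fc ≠ 0 := Polynomial.map_ne_zero hF
      obtain ⟨z, hz, hp, hq⟩ := exists_good_point F Fc hF hFc r r hr hr
      have h1z := h1 z hz
      rw [hG] at h1z
      simp only [Polynomial.map_zero, Polynomial.eval_zero, mul_zero, zero_mul] at h1z
      rcases mul_eq_zero.mp h1z with h | h
      · exact hp h
      · exact hq h
    exact ⟨0, by simp [hF, hG]⟩
  -- main case
  have hGc : Gc ≠ 0 := Polynomial.map_ne_zero hG
  set lam : ℂ := ((Real.exp (2 * (a ^ j) - 2 * (a ^ l)) : ℝ) : ℂ) with hlamdef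
  have hs2 : s ^ 2 = lam * r ^ 2 := by
    rw [hrdef, hsdef, hlamdef, ← Complex.ofReal_pow, ← Complex.ofReal_pow,
      ← Complex.ofReal_mul, Complex.ofReal_inj, sq, sq, ← Real.exp_add, ← Real.exp_add,
      ← Real.exp_add]
    ring_nf
  have ht : (2 * (a : ℝ) ^ j - 2 * a ^ l) ≠ 0 := by
    have hne : (a : ℝ) ^ j ≠ a ^ l := fun hh => hjl ((zpow_right_strictMono₀ ha).injective hh)
    intro hh
    apply hne
    linarith
  have hlam : ∀ m n : ℕ, lam ^ m = lam ^ n → m = n := by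
    intro m n hmn
    rw [hlamdef, ← Complex.ofReal_pow, ← Complex.ofReal_pow, Complex.ofReal_inj,
      ← Real.exp_nat_mul, ← Real.exp_nat_mul, Real.exp_eq_exp] at hmn
    have : (m : ℝ) = n := by
      rcases mul_right_cancel₀ ht hmn with h
      exact_mod_cast h
    exact_mod_cast this
  -- pointwise identities
  have key1 : ∀ w : ℂ, w ≠ 0 →
      F.eval w * Fc.eval (r ^ 2 / w) = G.eval w * Gc.eval (r ^ 2 / w) := by
    intro w hw
    have h1w := h1 (w / r) (div_ne_zero hw hr)
    rwa [show r * (w / r) = w by field_simp, show r / (w / r) = r ^ 2 / w by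
      rw [div_div_eq_mul_div, sq]] at h1w
  have key2 : ∀ w : ℂ, w ≠ 0 →
      F.eval w * Fc.eval (s ^ 2 / w) = G.eval w * Gc.eval (s ^ 2 / w) := by
    intro w hw
    have h2w := h2 (w / s) (div_ne_zero hw hs)
    rwa [show s * (w / s) = w by field_simp, show s / (w / s) = s ^ 2 / w by
      rw [div_div_eq_mul_div, sq]] at h2w
  set K : Polynomial ℂ :=
    Gc * Fc.comp (Polynomial.C lam * Polynomial.X)
      - Gc.comp (Polynomial.C lam * Polynomial.X) * Fc with hKdef
  have hK : K = 0 := by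
    by_contra hKne
    obtain ⟨z, hz, hKz, hGz⟩ := exists_good_point K G hKne hG 1 (r ^ 2) one_ne_zero
      (pow_ne_zero 2 hr)
    rw [one_mul] at hKz
    apply hKz
    have hw : (r ^ 2 / z) ≠ 0 := div_ne_zero (pow_ne_zero _ hr) hz
    have e1 := key1 (r ^ 2 / z) hw
    have e2 := key2 (r ^ 2 / z) hw
    rw [show r ^ 2 / (r ^ 2 / z) = z by field_simp] at e1
    rw [show s ^ 2 / (r ^ 2 / z) = lam * z by rw [hs2]; field_simp] at e2
    have hexp : K.eval z = Gc.eval z * Fc.eval (lam * z) - Gc.eval (lam * z) * Fc.eval z := by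
      simp [hKdef, Polynomial.eval_comp]
    have hzero : G.eval (r ^ 2 / z) * K.eval z = 0 := by
      rw [hexp]
      linear_combination Fc.eval z * e2 - Fc.eval (lam * z) * e1
    rcases mul_eq_zero.mp hzero with h | h
    · exact absurd h hGz
    · exact h
  have hcomp : Gc * Fc.comp (Polynomial.C lam * Polynomial.X)
      = Fc * Gc.comp (Polynomial.C lam * Polynomial.X) := by
    have := sub_eq_zero.mp hK
    rw [this]; ring
  have hkey := core_prop Fc Gc lam hlam hcomp
  -- map back with conjugation
  have hconjconj : (starRingEnd ℂ).comp (starRingEnd ℂ) = RingHom.id ℂ :=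
    RingHom.ext fun x => Complex.conj_conj x
  have hFlead : Fc.leadingCoeff = (starRingEnd ℂ) F.leadingCoeff :=
    Polynomial.leadingCoeff_map _
  have hGlead : Gc.leadingCoeff = (starRingEnd ℂ) G.leadingCoeff :=
    Polynomial.leadingCoeff_map _
  have hmap : Polynomial.C G.leadingCoeff * F = Polynomial.C F.leadingCoeff * G := by
    rw [Polynomial.smul_eq_C_mul, Polynomial.smul_eq_C_mul, hFlead, hGlead] at hkey
    have := congrArg (Polynomial.map (starRingEnd ℂ)) hkey
    rwa [Polynomial.map_mul, Polynomial.map_mul, Polynomial.map_C, Polynomial.map_C,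
      hFcdef, hGcdef, Polynomial.map_map, Polynomial.map_map, hconjconj, Polynomial.map_id,
      Polynomial.map_id, Complex.conj_conj, Complex.conj_conj] at this
  have hg : G.leadingCoeff ≠ 0 := Polynomial.leadingCoeff_ne_zero.mpr hG
  set c : ℂ := F.leadingCoeff / G.leadingCoeff with hcdef
  have hFcG : F = Polynomial.C c * G := by
    apply mul_left_cancel₀ (a := Polynomial.C G.leadingCoeff)
      (by simpa using hg)
    rw [hmap, ← mul_assoc, ← Polynomial.C_mul, hcdef]
    field_simp
  -- modulus 1
  obtain ⟨z, hz, hGz1, hGz2⟩ := exists_good_point G Gc hG hGc r r hr hr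
  have h1z := h1 z hz
  have hFcmap : Fc = Polynomial.C ((starRingEnd ℂ) c) * Gc := by
    rw [hFcdef, hFcG, Polynomial.map_mul, Polynomial.map_C, hGcdef]
  rw [hFcG, hFcmap] at h1z
  simp only [Polynomial.eval_mul, Polynomial.eval_C] at h1z
  have hc1 : c * (starRingEnd ℂ) c = 1 := by
    have hnz : G.eval (r * z) * Gc.eval (r / z) ≠ 0 := mul_ne_zero hGz1 hGz2
    apply mul_right_cancel₀ hnz
    rw [one_mul]
    linear_combination h1z
  have habs : ‖c‖ = 1 := by
    have hns : ((Complex.normSq c : ℝ) : ℂ) = 1 := by rw [← Complex.mul_conj]; exact hc1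
    have hns' : Complex.normSq c = 1 := by exact_mod_cast hns
    rw [Complex.norm_def, hns', Real.sqrt_one]
  refine ⟨c.arg, ?_⟩
  rw [hFcG]
  congr 2
  have h := Complex.norm_mul_exp_arg_mul_I c
  rw [habs] at h
  rw [mul_comm]
  simpa using h.symm
end

section
/- Let a < b, M > 0, and for z in the band {a < Im z < b} with |Re z| ≤ M and t = (Im z - a)/(b - a), define f(z) = (1/π) arg((e^{πM/(b-a)} - e^{π(z-ia)/(b-a)})/(e^{-πM/(b-a)} - e^{π(z-ia)/(b-a)})). Then f(z) ≥ (1-t) - 2t · e^{-π(M-|Re z|)/(b-a)}/(1 - e^{-π(M-|Re z|)/(b-a)}), provided M > |Re z|. -/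
open Complex Real

noncomputable section

/-- The harmonic-measure function
`f(z) = (1/π) arg((e^{πM/(b-a)} - e^{π(z-ia)/(b-a)}) / (e^{-πM/(b-a)} - e^{π(z-ia)/(b-a)}))`
of the boundary segment `{Im z = a, |Re z| < M}` in the band `{a < Im z < b}`. -/
def fband (a b M : ℝ) (z : ℂ) : ℝ :=
  (1 / π) * Complex.arg
    ((Complex.exp ((π * M / (b - a) : ℝ) : ℂ) -
        Complex.exp ((π : ℂ) * (z - (a : ℂ) * Complex.I) / ((b : ℂ) - (a : ℂ)))) /
     (Complex.exp ((-(π * M) / (b - a) : ℝ) : ℂ) -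
        Complex.exp ((π : ℂ) * (z - (a : ℂ) * Complex.I) / ((b : ℂ) - (a : ℂ)))))

lemma my_arctan_le_self {x : ℝ} (hx : 0 ≤ x) : Real.arctan x ≤ x := by
  by_contra h
  push_neg at h
  have h0 : 0 < x := by
    rcases hx.eq_or_lt with h' | h'
    · simp [← h'] at h
    · exact h'
  have h1 : Real.arctan x < π / 2 := Real.arctan_lt_pi_div_two x
  have h2 : x < Real.tan x := Real.lt_tan h0 (h.trans h1)
  have h3 : Real.tan x < Real.tan (Real.arctan x) :=
    Real.tan_lt_tan_of_nonneg_of_lt_pi_div_two hx h1 h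
  rw [Real.tan_arctan] at h3
  linarith

lemma my_arg_of_re_pos {w : ℂ} (hw : 0 < w.re) :
    Complex.arg w = Real.arctan (w.im / w.re) := by
  have h1 : |Complex.arg w| < π / 2 := Complex.abs_arg_lt_pi_div_two_iff.2 (Or.inl hw)
  rw [abs_lt] at h1
  rw [← Complex.tan_arg w, Real.arctan_tan h1.1 h1.2]

lemma my_arg_exp {α : ℝ} (hα : α ∈ Set.Ioc (-π) π) :
    Complex.arg (Complex.exp ((α : ℂ) * Complex.I)) = α := by
  rw [Complex.exp_mul_I]
  exact Complex.arg_cos_add_sin_mul_I hα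

set_option maxHeartbeats 1000000 in
/-- **Lower bound for the harmonic measure `fband` inside the band.**
For `z` in the band `{a < Im z < b}` with `|Re z| < M` and `t = (Im z - a)/(b - a)`,
`f(z) ≥ (1-t) - 2t e^{-π(M-|Re z|)/(b-a)} / (1 - e^{-π(M-|Re z|)/(b-a)})`. -/
theorem stmt14 (a b M : ℝ) (hab : a < b) (hM : 0 < M) (z : ℂ) (t : ℝ)
    (hz1 : a < z.im) (hz2 : z.im < b) (hre : |z.re| < M)
    (ht : t = (z.im - a) / (b - a)) :
    fband a b M z ≥ (1 - t) -
      2 * t * Real.exp (-π * (M - |z.re|) / (b - a)) /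
        (1 - Real.exp (-π * (M - |z.re|) / (b - a))) := by
  have hπ : (0:ℝ) < π := Real.pi_pos
  have hc : (0:ℝ) < b - a := by linarith
  have ht0 : 0 < t := by rw [ht]; exact div_pos (by linarith) hc
  have ht1 : t < 1 := by rw [ht, div_lt_one hc]; linarith
  set θ : ℝ := π * t with hθdef
  have hθ0 : 0 < θ := by positivity
  have hθπ : θ < π := by nlinarith
  have hθeq : θ = π * (z.im - a) / (b - a) := by rw [hθdef, ht]; ring
  set s : ℝ := Real.exp (-π * (M - |z.re|) / (b - a)) with hsdef
  have hs0 : 0 < s := Real.exp_pos _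
  have hs1 : s < 1 := by
    rw [hsdef]
    apply Real.exp_lt_one_iff.2
    apply div_neg_of_neg_of_pos _ hc
    nlinarith
  set r : ℝ := Real.exp (π * z.re / (b - a)) with hrdef
  set A : ℝ := Real.exp (π * M / (b - a)) with hAdef
  set u : ℝ := Real.exp (-(π * (M - z.re)) / (b - a)) with hudef
  set v : ℝ := Real.exp (-(π * (M + z.re)) / (b - a)) with hvdef
  have hu0 : 0 < u := Real.exp_pos _
  have hv0 : 0 < v := Real.exp_pos _
  have hA0 : 0 < A := Real.exp_pos _
  have hus : u ≤ s := by
    rw [hudef, hsdef]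
    apply Real.exp_le_exp.2
    rw [div_le_div_iff₀ hc hc]
    nlinarith [le_abs_self z.re, mul_le_mul_of_nonneg_right
      (mul_le_mul_of_nonneg_left (sub_le_sub_left (le_abs_self z.re) M) hπ.le) hc.le]
  have hvs : v ≤ s := by
    rw [hvdef, hsdef]
    apply Real.exp_le_exp.2
    rw [div_le_div_iff₀ hc hc]
    nlinarith [neg_abs_le z.re, mul_le_mul_of_nonneg_right
      (mul_le_mul_of_nonneg_left (sub_le_sub_left (neg_abs_le z.re) M) hπ.le) hc.le]
  have hu1 : u < 1 := lt_of_le_of_lt hus hs1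
  have hv1 : v < 1 := lt_of_le_of_lt hvs hs1
  -- trig facts
  have hsin0 : 0 ≤ Real.sin θ := Real.sin_nonneg_of_nonneg_of_le_pi hθ0.le hθπ.le
  have hsinθ : Real.sin θ ≤ θ := Real.sin_le hθ0.le
  have hcos1 : Real.cos θ ≤ 1 := Real.cos_le_one θ
  -- complex pieces
  set E : ℂ := Complex.exp ((θ : ℂ) * Complex.I) with hEdef
  set E' : ℂ := Complex.exp (((-θ : ℝ) : ℂ) * Complex.I) with hE'def
  have hEE' : E * E' = 1 := by
    rw [hEdef, hE'def, ← Complex.exp_add, ← Complex.exp_zero]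
    congr 1
    push_cast
    ring
  have hζexp : Complex.exp ((π : ℂ) * (z - (a : ℂ) * Complex.I) / ((b : ℂ) - (a : ℂ)))
      = (r : ℂ) * E := by
    have harg : (π : ℂ) * (z - (a : ℂ) * Complex.I) / ((b : ℂ) - (a : ℂ))
        = ((π * z.re / (b - a) : ℝ) : ℂ) + ((θ : ℝ) : ℂ) * Complex.I := by
      have hba : ((b : ℂ) - (a : ℂ)) ≠ 0 := by
        rw [← Complex.ofReal_sub]
        exact_mod_cast hc.ne'
      have hba' : ((b - a : ℝ) : ℂ) ≠ 0 := by exact_mod_cast hc.ne'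
      rw [hθeq, show ((b : ℂ) - (a : ℂ)) = ((b - a : ℝ) : ℂ) by push_cast; ring,
        div_eq_iff hba', add_mul, mul_right_comm, ← Complex.ofReal_mul, ← Complex.ofReal_mul,
        div_mul_cancel₀ _ hc.ne', div_mul_cancel₀ _ hc.ne']
      apply Complex.ext <;> simp <;> ring
    rw [harg, Complex.exp_add, hEdef, hrdef, Complex.ofReal_exp]
  set q₁ : ℂ := 1 - (u : ℂ) * E with hq₁def
  set q₂ : ℂ := 1 - (v : ℂ) * E' with hq₂def
  have hq₁re : q₁.re = 1 - u * Real.cos θ := by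
    rw [hq₁def, hEdef]
    simp only [Complex.sub_re, Complex.one_re, Complex.mul_re, Complex.ofReal_re,
      Complex.ofReal_im, Complex.exp_ofReal_mul_I_re, Complex.exp_ofReal_mul_I_im]
    ring
  have hq₁im : q₁.im = -(u * Real.sin θ) := by
    rw [hq₁def, hEdef]
    simp only [Complex.sub_im, Complex.one_im, Complex.mul_im, Complex.ofReal_re,
      Complex.ofReal_im, Complex.exp_ofReal_mul_I_re, Complex.exp_ofReal_mul_I_im]
    ring
  have hq₂re : q₂.re = 1 - v * Real.cos θ := by
    rw [hq₂def, hE'def]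
    simp only [Complex.sub_re, Complex.one_re, Complex.mul_re, Complex.ofReal_re,
      Complex.ofReal_im, Complex.exp_ofReal_mul_I_re, Complex.exp_ofReal_mul_I_im]
    rw [Real.cos_neg]
    ring
  have hq₂im : q₂.im = v * Real.sin θ := by
    rw [hq₂def, hE'def]
    simp only [Complex.sub_im, Complex.one_im, Complex.mul_im, Complex.ofReal_re,
      Complex.ofReal_im, Complex.exp_ofReal_mul_I_re, Complex.exp_ofReal_mul_I_im]
    rw [Real.sin_neg]
    ring
  have hq₁repos : 0 < q₁.re := by rw [hq₁re]; nlinarith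
  have hq₂repos : 0 < q₂.re := by rw [hq₂re]; nlinarith
  have hq₁ne : q₁ ≠ 0 := by
    intro h; rw [h] at hq₁repos; simp at hq₁repos
  have hq₂ne : q₂ ≠ 0 := by
    intro h; rw [h] at hq₂repos; simp at hq₂repos
  -- arctan bound
  have key : ∀ w : ℝ, 0 < w → w ≤ s →
      Real.arctan (w * Real.sin θ / (1 - w * Real.cos θ)) ≤ θ * s / (1 - s) := by
    intro w hw0 hws
    have hw1 : w < 1 := lt_of_le_of_lt hws hs1
    have hden : 0 < 1 - w * Real.cos θ := by nlinarith
    have hXnn : 0 ≤ w * Real.sin θ / (1 - w * Real.cos θ) := by positivity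
    refine le_trans (my_arctan_le_self hXnn) ?_
    rw [div_le_div_iff₀ hden (by linarith)]
    nlinarith [mul_nonneg hw0.le hsin0, mul_nonneg hs0.le hθ0.le,
      mul_le_mul_of_nonneg_left hsinθ (mul_nonneg hw0.le (by linarith : (0:ℝ) ≤ 1 - s)),
      mul_le_mul_of_nonneg_left hws (mul_nonneg hθ0.le (by linarith : (0:ℝ) ≤ 1 - w)),
      mul_le_mul_of_nonneg_left hcos1 (mul_nonneg (mul_nonneg hs0.le hθ0.le) hw0.le)]
  have hargq₁ : Complex.arg q₁ = - Real.arctan (u * Real.sin θ / (1 - u * Real.cos θ)) := by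
    rw [my_arg_of_re_pos hq₁repos, hq₁re, hq₁im, neg_div, Real.arctan_neg]
  have hargq₂ : Complex.arg q₂ = Real.arctan (v * Real.sin θ / (1 - v * Real.cos θ)) := by
    rw [my_arg_of_re_pos hq₂repos, hq₂re, hq₂im]
  have harctan_nn : ∀ w : ℝ, 0 < w → w < 1 →
      0 ≤ Real.arctan (w * Real.sin θ / (1 - w * Real.cos θ)) := by
    intro w hw0 hw1
    have hden : 0 < 1 - w * Real.cos θ := by nlinarith
    rw [← Real.arctan_zero]
    apply Real.arctan_strictMono.monotone
    positivity
  have hq₁lb : -(θ * s / (1 - s)) ≤ Complex.arg q₁ := by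
    rw [hargq₁]; exact neg_le_neg (key u hu0 hus)
  have hq₁ub : Complex.arg q₁ ≤ 0 := by
    rw [hargq₁]; exact neg_nonpos.2 (harctan_nn u hu0 hu1)
  have hq₂lb : 0 ≤ Complex.arg q₂ := by rw [hargq₂]; exact harctan_nn v hv0 hv1
  have hq₂ub : Complex.arg q₂ ≤ θ * s / (1 - s) := by rw [hargq₂]; exact key v hv0 hvs
  have hq₁range : -(π/2) < Complex.arg q₁ := by
    rw [hargq₁]; exact neg_lt_neg (Real.arctan_lt_pi_div_two _)
  have hq₂range : Complex.arg q₂ < π/2 := by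
    rw [hargq₂]; exact Real.arctan_lt_pi_div_two _
  -- factorizations
  have hAu : A * u = r := by
    rw [hAdef, hudef, hrdef, ← Real.exp_add, ← add_div]
    congr 1
    ring
  have hrv : r * v = Real.exp (-(π * M) / (b - a)) := by
    rw [hrdef, hvdef, ← Real.exp_add, ← add_div]
    congr 1
    ring
  have hNum : ((A : ℝ) : ℂ) - (r : ℂ) * E = (A : ℂ) * q₁ := by
    have h1 : (A : ℂ) * q₁ = (A : ℂ) - ((A * u : ℝ) : ℂ) * E := by
      rw [hq₁def]; push_cast; ring
    rw [h1, hAu]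
  have hDen : ((Real.exp (-(π * M) / (b - a)) : ℝ) : ℂ) - (r : ℂ) * E
      = (-((r : ℂ) * E)) * q₂ := by
    have h1 : (-((r : ℂ) * E)) * q₂ = ((r * v : ℝ) : ℂ) * (E * E') - (r : ℂ) * E := by
      rw [hq₂def]; push_cast; ring
    rw [h1, hEE', hrv, mul_one]
  have hζne : (r : ℂ) * E ≠ 0 := by
    apply mul_ne_zero
    · exact_mod_cast (Real.exp_pos _).ne'
    · exact Complex.exp_ne_zero _
  have hNumne : (A : ℂ) * q₁ ≠ 0 :=
    mul_ne_zero (by exact_mod_cast hA0.ne') hq₁ne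
  have hDenne : (-((r : ℂ) * E)) * q₂ ≠ 0 :=
    mul_ne_zero (neg_ne_zero.2 hζne) hq₂ne
  -- arg of -ζ
  have hargnegζ : Complex.arg (-((r : ℂ) * E)) = θ - π := by
    have h1 : -((r : ℂ) * E) = (r : ℂ) * Complex.exp (((θ - π : ℝ) : ℂ) * Complex.I) := by
      have : Complex.exp (((θ - π : ℝ) : ℂ) * Complex.I)
          = E * Complex.exp (-((π : ℂ) * Complex.I)) := by
        rw [hEdef, ← Complex.exp_add]
        congr 1
        push_cast
        ring
      rw [this, Complex.exp_neg, Complex.exp_pi_mul_I]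
      field_simp
    rw [h1, Complex.arg_real_mul _ (Real.exp_pos _)]
    exact my_arg_exp ⟨by linarith, by linarith⟩
  -- the angle identity
  set S : ℝ := Complex.arg q₁ + (π - θ) - Complex.arg q₂ with hSdef
  have hangle : (Complex.arg ((((A : ℝ) : ℂ) * q₁) / ((-((r : ℂ) * E)) * q₂)) : Real.Angle)
      = ((S : ℝ) : Real.Angle) := by
    rw [Complex.arg_div_coe_angle hNumne hDenne,
      Complex.arg_mul_coe_angle (neg_ne_zero.2 hζne) hq₂ne,
      Complex.arg_real_mul _ hA0, hargnegζ, hSdef]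
    have h2 : Complex.arg q₁ + (π - θ) - Complex.arg q₂
        = Complex.arg q₁ - ((θ - π) + Complex.arg q₂) := by ring
    rw [h2]
    push_cast [Real.Angle.coe_sub, Real.Angle.coe_add]
    abel
  have hSmem : S ∈ Set.Ioc (-π) π := by
    constructor
    · rw [hSdef]; linarith
    · rw [hSdef]; linarith
  have hargval : Complex.arg ((((A : ℝ) : ℂ) * q₁) / ((-((r : ℂ) * E)) * q₂)) = S := by
    have h1 := congrArg Real.Angle.toReal hangle
    rwa [Complex.arg_coe_angle_toReal_eq_arg,
      Real.Angle.toReal_coe_eq_self_iff_mem_Ioc.2 hSmem] at h1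
  -- put it together
  have hfband : fband a b M z = (1 / π) * S := by
    rw [fband, hζexp]
    rw [show Complex.exp ((π * M / (b - a) : ℝ) : ℂ) = ((A : ℝ) : ℂ) by
      rw [hAdef, Complex.ofReal_exp]]
    rw [show Complex.exp ((-(π * M) / (b - a) : ℝ) : ℂ)
        = ((Real.exp (-(π * M) / (b - a)) : ℝ) : ℂ) by rw [Complex.ofReal_exp]]
    rw [hNum, hDen, hargval]
  rw [hfband, ge_iff_le]
  have hSlb : π - θ - 2 * (θ * s / (1 - s)) ≤ S := by
    rw [hSdef]; linarith
  have hEq : (1 / π) * (π - θ - 2 * (θ * s / (1 - s)))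
      = (1 - t) - 2 * t * s / (1 - s) := by
    rw [hθdef]
    field_simp
  calc (1 - t) - 2 * t * s / (1 - s)
      = (1 / π) * (π - θ - 2 * (θ * s / (1 - s))) := hEq.symm
    _ ≤ (1 / π) * S := by
        apply mul_le_mul_of_nonneg_left hSlb
        positivity
end
end
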